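/- arXiv:2205.10050 — 3 statements merged into one kernel-verified Lean document; each statement's English description precedes it below -/
import Mathlib

section
/- With the sequence (a_k) as in the construction, for every k ≥ 1 and every index j with 1 ≤ j ≤ n, the partial sum S_{j,k} = Σ_{h=0}^{k} 1/a_{nh+j}, written as a fraction in lowest terms, has denominator exactly a_{nk+j}. -/
open Filter Finset

/-- Linear form approximation function: minimum of |b₀ + Σ bⱼξⱼ| over nonzero
integer vectors with `max_{1≤i≤n} |b_i| ≤ Q`. -/
noncomputable def psiStar {n : ℕ} (x : Fin n → ℝ) (Q : ℕ) : ℝ :=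
  sInf {r : ℝ | ∃ b : Fin (n + 1) → ℤ, b ≠ 0 ∧ (∀ i : Fin n, |b i.succ| ≤ (Q : ℤ)) ∧
    r = |(b 0 : ℝ) + ∑ i : Fin n, (b i.succ : ℝ) * x i|}

/-- Dirichlet constant `Θ*(x) = limsup_{Q→∞} Qⁿ ψ*_x(Q)`. -/
noncomputable def thetaStar {n : ℕ} (x : Fin n → ℝ) : ℝ :=
  Filter.limsup (fun Q : ℕ => (Q : ℝ) ^ n * psiStar x Q) Filter.atTop

/-- The recursive sequence of the construction of §2:
`a_j = 8·j!` for `1 ≤ j ≤ n`, `a_{nk+1} = a_{nk}^{M_k}`,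
`a_{nk+j} = a_{nk+1}^j` for `2 ≤ j ≤ n-1`, and
`a_{nk+n} = ⌈c⁻¹ a_{nk+1}⌉ · a_{nk+n-1}`; with the convention `a_0 = 1`. -/
def IsConstrSeq (n : ℕ) (c : ℝ) (M : ℕ → ℕ) (a : ℕ → ℕ) : Prop :=
  a 0 = 1 ∧
  (∀ j, 1 ≤ j → j ≤ n → a j = 8 * Nat.factorial j) ∧
  (∀ k, 1 ≤ k → a (n * k + 1) = a (n * k) ^ M k) ∧
  (∀ k, 1 ≤ k → ∀ j, 2 ≤ j → j ≤ n - 1 → a (n * k + j) = a (n * k + 1) ^ j) ∧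
  (∀ k, 1 ≤ k → a (n * k + n) = ⌈c⁻¹ * (a (n * k + 1) : ℝ)⌉₊ * a (n * k + n - 1))

/-- `ξ_j = Σ_{h≥0} 1/a_{nh+j}`. -/
noncomputable def xiCoord (a : ℕ → ℕ) (n j : ℕ) : ℝ := ∑' h : ℕ, (1 : ℝ) / (a (n * h + j))

/-- The vector `x = (ξ₁,…,ξₙ)` of the construction. -/
noncomputable def xVec (a : ℕ → ℕ) (n : ℕ) : Fin n → ℝ := fun j => xiCoord a n (j.val + 1)

/-- The rational partial sum `S_{j,k} = Σ_{h=0}^{k} 1/a_{nh+j}`. -/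
def Spartial (a : ℕ → ℕ) (n j k : ℕ) : ℚ := ∑ h ∈ Finset.range (k + 1), (1 : ℚ) / (a (n * h + j))


/-- If `q` has denominator `d`, `d ∣ m`, and every prime of `m` divides `m/d`,
then `q + 1/m` has denominator exactly `m`. -/
lemma den_add_one_div (q : ℚ) (m : ℕ) (hm : 0 < m) (hd : q.den ∣ m)
    (hp : ∀ p : ℕ, p.Prime → p ∣ m → q.den * p ∣ m) :
    (q + 1 / (m : ℚ)).den = m := by
  set d := q.den with hdef
  set e := m / d with hedef
  have hd0 : 0 < d := q.pos
  have hme : d * e = m := Nat.mul_div_cancel' hd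
  have hm0 : (m : ℚ) ≠ 0 := by positivity
  have hd0' : (d : ℚ) ≠ 0 := by positivity
  set N : ℤ := q.num * e + 1 with hNdef
  have hval : q + 1 / (m : ℚ) = (N : ℚ) / (m : ℚ) := by
    rw [eq_div_iff hm0, add_mul, one_div_mul_cancel hm0]
    have hq : (q : ℚ) = (q.num : ℚ) / (d : ℚ) := (Rat.num_div_den q).symm
    rw [hq]
    push_cast [hNdef, ← hme]
    field_simp
  have hcop : Nat.Coprime N.natAbs m := by
    by_contra h
    obtain ⟨p, pp, hpg⟩ := Nat.exists_prime_and_dvd h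
    have hpN : (p : ℤ) ∣ N := Int.natAbs_dvd_natAbs.mp (by simpa using hpg.trans (Nat.gcd_dvd_left _ _))
    have hpm : p ∣ m := hpg.trans (Nat.gcd_dvd_right _ _)
    have hpe : p ∣ e := by
      have := hp p pp hpm
      exact (Nat.dvd_div_iff_mul_dvd hd).mpr this
    have : (p : ℤ) ∣ 1 := by
      have h1 : (p : ℤ) ∣ q.num * e := Dvd.dvd.mul_left (Int.natCast_dvd_natCast.mpr hpe) _
      have := dvd_sub hpN h1
      simpa [hNdef] using this
    have h2 := Int.le_of_dvd one_pos this
    have h3 := pp.two_le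
    omega
  have hb0 : (0 : ℤ) < (m : ℤ) := by exact_mod_cast hm
  have := Rat.den_div_eq_of_coprime hb0 (by simpa using hcop)
  rw [hval]
  exact_mod_cast this

section Constr
variable {n : ℕ} {c : ℝ} {M : ℕ → ℕ} {a : ℕ → ℕ}

/-- For `1 ≤ j ≤ n-1` and `k ≥ 1`, `a (n*k+j) = a (n*k+1) ^ j`. -/
lemma constr_expr1 (hn : 2 ≤ n) (ha : IsConstrSeq n c M a) :
    ∀ k, 1 ≤ k → ∀ j, 1 ≤ j → j ≤ n - 1 → a (n * k + j) = a (n * k + 1) ^ j := by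
  intro k hk j hj1 hj2
  rcases eq_or_lt_of_le hj1 with h | h
  · rw [← h, pow_one]
  · exact ha.2.2.2.1 k hk j h hj2

/-- For `k ≥ 1`, `a (n*k+n) = ⌈c⁻¹ a(n*k+1)⌉ * a (n*k+1) ^ (n-1)`. -/
lemma constr_exprn (hn : 2 ≤ n) (ha : IsConstrSeq n c M a) :
    ∀ k, 1 ≤ k → a (n * k + n) =
      ⌈c⁻¹ * (a (n * k + 1) : ℝ)⌉₊ * a (n * k + 1) ^ (n - 1) := by
  intro k hk
  have h1 := ha.2.2.2.2 k hk
  have hidx : n * k + n - 1 = n * k + (n - 1) := by omega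
  rw [h1, hidx, constr_expr1 hn ha k hk (n - 1) (by omega) le_rfl]

/-- Positivity of all terms. -/
lemma constr_pos (hn : 2 ≤ n) (hc : c ∈ Set.Ioo (0:ℝ) 1) (ha : IsConstrSeq n c M a) :
    ∀ k, ∀ j, 1 ≤ j → j ≤ n → 0 < a (n * k + j) := by
  intro k
  induction k with
  | zero =>
    intro j hj1 hj2
    have : n * 0 + j = j := by ring
    rw [this, ha.2.1 j hj1 hj2]
    positivity
  | succ k ih =>
    intro j hj1 hj2
    have hk1 : 1 ≤ k + 1 := by omega
    have hidx : n * (k + 1) = n * k + n := by ring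
    have hA : 0 < a (n * (k + 1)) := by rw [hidx]; exact ih n (by omega) le_rfl
    have hB : 0 < a (n * (k + 1) + 1) := by
      rw [ha.2.2.1 (k + 1) hk1]; exact pow_pos hA _
    rcases le_or_gt j (n - 1) with hj | hj
    · rw [constr_expr1 hn ha (k + 1) hk1 j hj1 hj]
      exact pow_pos hB _
    · have hjn : j = n := by omega
      rw [hjn, constr_exprn hn ha (k + 1) hk1]
      have hceil : 0 < ⌈c⁻¹ * (a (n * (k + 1) + 1) : ℝ)⌉₊ := by
        rw [Nat.ceil_pos]
        have : (0:ℝ) < c⁻¹ := inv_pos.mpr hc.1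
        positivity
      exact Nat.mul_pos hceil (pow_pos hB _)

/-- Divisibility of a row entry into the power of the next block base. -/
lemma constr_prev_dvd (hn : 2 ≤ n) (ha : IsConstrSeq n c M a) :
    ∀ k, ∀ j, 1 ≤ j → j ≤ n - 1 → a (n * k + j) ∣ a (n * (k + 1)) ^ j := by
  intro k j hj1 hj2
  have hidx : n * (k + 1) = n * k + n := by ring
  rw [hidx]
  rcases Nat.eq_zero_or_pos k with rfl | hk
  · -- base: a j = 8 * j! divides (a n) ^ j = (8 * n!) ^ j
    have h1 : n * 0 + j = j := by ring
    have h2 : n * 0 + n = n := by ring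
    rw [h1, h2, ha.2.1 j hj1 (by omega), ha.2.1 n (by omega) le_rfl]
    exact dvd_trans (mul_dvd_mul dvd_rfl
      (Nat.factorial_dvd_factorial (by omega))) (dvd_pow_self _ (by omega))
  · -- inductive rows
    rw [constr_expr1 hn ha k hk j hj1 hj2]
    apply pow_dvd_pow_of_dvd
    rw [constr_exprn hn ha k hk]
    exact dvd_mul_of_dvd_right (dvd_pow_self _ (by omega)) _

/-- The key step divisibility: `a (n*k+j) ∣ a (n*(k+1)+j)`, and moreover for every
prime `p` dividing `a (n*(k+1)+j)`, also `a (n*k+j) * p` divides it. -/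
lemma constr_step (hn : 2 ≤ n) (hM : ∀ k, 2 ≤ M k) (ha : IsConstrSeq n c M a) :
    ∀ k, ∀ j, 1 ≤ j → j ≤ n →
      a (n * k + j) ∣ a (n * (k + 1) + j) ∧
      ∀ p : ℕ, p.Prime → p ∣ a (n * (k + 1) + j) → a (n * k + j) * p ∣ a (n * (k + 1) + j) := by
  intro k j hj1 hj2
  have hk1 : 1 ≤ k + 1 := by omega
  have hB : a (n * (k + 1) + 1) = a (n * (k + 1)) ^ M (k + 1) := ha.2.2.1 (k + 1) hk1
  set A := a (n * (k + 1)) with hAdef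
  have hM2 : 2 ≤ M (k + 1) := hM (k + 1)
  rcases le_or_gt j (n - 1) with hj | hj
  · -- middle case
    have hm : a (n * (k + 1) + j) = A ^ (M (k + 1) * j) := by
      rw [constr_expr1 hn ha (k + 1) hk1 j hj1 hj, hB, ← pow_mul]
    have hdA : a (n * k + j) ∣ A ^ j := constr_prev_dvd hn ha k j hj1 hj
    have hle : j + 1 ≤ M (k + 1) * j := by nlinarith
    have hdm : a (n * k + j) ∣ a (n * (k + 1) + j) := by
      rw [hm]
      exact hdA.trans (pow_dvd_pow _ (by omega))
    refine ⟨hdm, fun p pp hpm => ?_⟩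
    have hpA : p ∣ A := by
      rw [hm] at hpm
      exact pp.dvd_of_dvd_pow hpm
    calc a (n * k + j) * p ∣ A ^ j * A := mul_dvd_mul hdA hpA
    _ = A ^ (j + 1) := (pow_succ A j).symm
    _ ∣ A ^ (M (k + 1) * j) := pow_dvd_pow _ hle
    _ = a (n * (k + 1) + j) := hm.symm
  · -- last case j = n
    have hjn : j = n := by omega
    rw [hjn]
    have hd : a (n * k + n) = A := by rw [show n * k + n = n * (k + 1) from by ring]
    have hm : a (n * (k + 1) + n) =
        ⌈c⁻¹ * ((A ^ M (k + 1) : ℕ) : ℝ)⌉₊ * A ^ (M (k + 1) * (n - 1)) := by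
      rw [constr_exprn hn ha (k + 1) hk1, hB, ← pow_mul]
    set C := ⌈c⁻¹ * ((A ^ M (k + 1) : ℕ) : ℝ)⌉₊ with hCdef
    have he2 : 2 ≤ M (k + 1) * (n - 1) := by nlinarith [Nat.sub_pos_of_lt (by omega : 1 < n)]
    have hdm : a (n * k + n) ∣ a (n * (k + 1) + n) := by
      rw [hd, hm]
      exact dvd_mul_of_dvd_right (dvd_pow_self _ (by omega)) _
    refine ⟨hdm, fun p pp hpm => ?_⟩
    rw [hd, hm]
    rw [hm] at hpm
    rcases (pp.dvd_mul).mp hpm with hpC | hpA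
    · calc A * p ∣ A ^ (M (k + 1) * (n - 1)) * C :=
        mul_dvd_mul (dvd_pow_self _ (by omega)) hpC
      _ = C * A ^ (M (k + 1) * (n - 1)) := mul_comm _ _
    · have hpA' : p ∣ A := pp.dvd_of_dvd_pow hpA
      calc A * p ∣ A * A := mul_dvd_mul_left A hpA'
      _ = A ^ 2 := (sq A).symm
      _ ∣ A ^ (M (k + 1) * (n - 1)) := pow_dvd_pow _ he2
      _ ∣ C * A ^ (M (k + 1) * (n - 1)) := dvd_mul_left _ _

end Constr


theorem partial_sum_denominator (n : ℕ) (hn : 2 ≤ n) (c : ℝ) (hc : c ∈ Set.Ioo (0:ℝ) 1) (M : ℕ → ℕ)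
    (hM : ∀ k, 2 ≤ M k) (a : ℕ → ℕ) (ha : IsConstrSeq n c M a) :
    ∀ k, 1 ≤ k → ∀ j, 1 ≤ j → j ≤ n → (Spartial a n j k).den = a (n * k + j) := by
  have key : ∀ k, ∀ j, 1 ≤ j → j ≤ n → (Spartial a n j k).den = a (n * k + j) := by
    intro k
    induction k with
    | zero =>
      intro j hj1 hj2
      have hpos : 0 < a (n * 0 + j) := constr_pos hn hc ha 0 j hj1 hj2
      have h0 := den_add_one_div 0 (a (n * 0 + j)) hpos (by simp)
        (fun p pp hp => by simpa using hp)
      rw [Spartial, Finset.sum_range_one]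
      simpa using h0
    | succ k ih =>
      intro j hj1 hj2
      have hq := ih j hj1 hj2
      have hstep := constr_step hn hM ha k j hj1 hj2
      have hmpos := constr_pos hn hc ha (k + 1) j hj1 hj2
      have hsum : Spartial a n j (k + 1) =
          Spartial a n j k + 1 / (a (n * (k + 1) + j) : ℚ) := by
        rw [Spartial, Spartial, Finset.sum_range_succ]
      rw [hsum]
      exact den_add_one_div _ _ hmpos (hq ▸ hstep.1) (fun p pp hp => hq ▸ hstep.2 p pp hp)
  intro k _ j hj1 hj2
  exact key k j hj1 hj2
end

section
/- With the construction of §2 (sequence (a_k) and ξ_j = Σ_h 1/a_{nh+j}), for Q in the range [a_{nk+1}, a_{n(k+1)}) the choice b₁ = a_{nk+1}, b₂ = ⋯ = bₙ = 0, and b₀ = −Σ_{h=0}^{k} a_{nk+1}/a_{nh+1} gives an integer vector with max|b_j| ≤ Q and |b₀ + b₁ξ₁| = a_{nk+1} · Σ_{h≥k+1} 1/a_{nh+1} ≤ 2 a_{nk+1}/a_{n(k+1)+1}. -/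
open Filter Finset

lemma constr_facts {n : ℕ} (hn : 2 ≤ n) {c : ℝ} (hc : c ∈ Set.Ioo (0:ℝ) 1)
    {M : ℕ → ℕ} (hM : ∀ k, 2 ≤ M k) {a : ℕ → ℕ} (ha : IsConstrSeq n c M a) :
    ∀ m, 0 < a m ∧ a m ∣ a (m + 1) ∧ 2 * a m ≤ a (m + 1) := by
  obtain ⟨h0, hfac, hpow, hmid, hlast⟩ := ha
  intro m
  induction m using Nat.strong_induction_on with
  | _ m IH =>
  have h2le : ∀ i, 1 ≤ i → i ≤ m → 2 ≤ a i := by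
    intro i h1 h2
    obtain ⟨j, rfl⟩ : ∃ j, i = j + 1 := ⟨i - 1, by omega⟩
    have H1 := (IH j (by omega)).2.2
    have H2 := (IH j (by omega)).1
    omega
  have posm : 0 < a m := by
    rcases Nat.eq_zero_or_pos m with rfl | h
    · simp [h0]
    · exact lt_of_lt_of_le (by norm_num) (h2le m h le_rfl)
  refine ⟨posm, ?_⟩
  rcases Nat.lt_or_ge m n with hmn | hmn
  · -- m < n, so m + 1 ≤ n
    rcases Nat.eq_zero_or_pos m with rfl | h
    · have : a 1 = 8 := by
        have := hfac 1 le_rfl (by omega)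
        simpa [Nat.factorial] using this
      rw [h0, this]
      exact ⟨⟨8, by norm_num⟩, by norm_num⟩
    · have e1 : a m = 8 * Nat.factorial m := hfac m h (by omega)
      have e2 : a (m + 1) = 8 * Nat.factorial (m + 1) := hfac (m+1) (by omega) (by omega)
      rw [e1, e2, Nat.factorial_succ]
      constructor
      · exact ⟨m + 1, by ring⟩
      · have : 1 ≤ Nat.factorial m := Nat.one_le_iff_ne_zero.mpr (Nat.factorial_ne_zero m)
        nlinarith
  · -- m ≥ n : decompose m = n * k + j
    set k := m / n with hkdef
    set j := m % n with hjdef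
    have hm : m = n * k + j := by rw [hkdef, hjdef]; exact (Nat.div_add_mod m n).symm
    have hjn : j < n := Nat.mod_lt m (by omega)
    have hk1 : 1 ≤ k := by
      rw [hkdef]
      exact Nat.one_le_div_iff (by omega) |>.mpr hmn
    rcases Nat.eq_zero_or_pos j with hj0 | hj1
    · -- j = 0 : m = n*k, a (m+1) = a m ^ M k
      have e : a (m + 1) = a m ^ M k := by
        have := hpow k hk1
        rw [hm, hj0]; simpa using this
      have h2 : 2 ≤ a m := h2le m (by omega) le_rfl
      rw [e]
      constructor
      · exact dvd_pow_self _ (by have := hM k; omega)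
      · calc 2 * a m ≤ a m * a m := by nlinarith
          _ = a m ^ 2 := by ring
          _ ≤ a m ^ M k := Nat.pow_le_pow_right (by omega) (hM k)
    · have hB : 2 ≤ a (n * k + 1) := h2le (n * k + 1) (by omega) (by omega)
      rcases Nat.lt_or_ge j (n - 1) with hjlt | hjge
      · -- 1 ≤ j ≤ n - 2
        have em : a m = a (n * k + 1) ^ j := by
          rcases Nat.eq_or_lt_of_le hj1 with h1 | h2
          · rw [hm, ← h1]; simp
          · exact hm ▸ hmid k hk1 j h2 (by omega)
        have em1 : a (m + 1) = a (n * k + 1) ^ (j + 1) := by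
          have : m + 1 = n * k + (j + 1) := by omega
          rw [this]; exact hmid k hk1 (j+1) (by omega) (by omega)
        rw [em, em1, pow_succ]
        refine ⟨⟨_, rfl⟩, ?_⟩
        rw [mul_comm 2]
        exact Nat.mul_le_mul_left _ hB
      · -- j = n - 1 : m + 1 = n*k + n
        have hj : j = n - 1 := by omega
        have e : a (m + 1) = ⌈c⁻¹ * (a (n * k + 1) : ℝ)⌉₊ * a m := by
          have := hlast k hk1
          have e1 : m + 1 = n * k + n := by omega
          have e2 : n * k + n - 1 = m := by omega
          rw [e1, this, e2]
        have hF : 2 ≤ ⌈c⁻¹ * (a (n * k + 1) : ℝ)⌉₊ := by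
          have hc1 : (1:ℝ) ≤ c⁻¹ := one_le_inv_iff₀.mpr ⟨hc.1, le_of_lt hc.2⟩
          have : (2:ℝ) ≤ c⁻¹ * (a (n * k + 1) : ℝ) := by
            calc (2:ℝ) ≤ (a (n * k + 1) : ℝ) := by exact_mod_cast hB
              _ = 1 * _ := (one_mul _).symm
              _ ≤ c⁻¹ * _ := by
                apply mul_le_mul_of_nonneg_right hc1 (by positivity)
          calc (2:ℕ) = ⌈(2:ℝ)⌉₊ := by simp
            _ ≤ _ := Nat.ceil_le_ceil this
        rw [e]
        exact ⟨dvd_mul_left _ _, Nat.mul_le_mul_right _ hF⟩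

lemma constr_dvd_mono {a : ℕ → ℕ} (F : ∀ m, 0 < a m ∧ a m ∣ a (m + 1) ∧ 2 * a m ≤ a (m + 1)) :
    ∀ i j, i ≤ j → a i ∣ a j := by
  intro i j hij
  induction j, hij using Nat.le_induction with
  | base => exact dvd_rfl
  | succ j hij IH => exact IH.trans (F j).2.1

lemma constr_grow {a : ℕ → ℕ} (F : ∀ m, 0 < a m ∧ a m ∣ a (m + 1) ∧ 2 * a m ≤ a (m + 1)) :
    ∀ m d, 2 ^ d * a m ≤ a (m + d) := by
  intro m d
  induction d with
  | zero => simp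
  | succ d IH =>
    have h := (F (m + d)).2.2
    calc 2 ^ (d + 1) * a m = 2 * (2 ^ d * a m) := by ring
      _ ≤ 2 * a (m + d) := by omega
      _ ≤ a (m + d + 1) := h

theorem case_one_estimate (n : ℕ) (hn : 2 ≤ n) (c : ℝ) (hc : c ∈ Set.Ioo (0:ℝ) 1) (M : ℕ → ℕ)
    (hM : ∀ k, 2 ≤ M k) (a : ℕ → ℕ) (ha : IsConstrSeq n c M a)
    (k : ℕ) (hk : 1 ≤ k) (Q : ℕ) (hQ1 : a (n * k + 1) ≤ Q) (hQ2 : Q < a (n * (k + 1))) :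
    (∃ b0 : ℤ, (b0 : ℝ) = -∑ h ∈ Finset.range (k + 1), (a (n * k + 1) : ℝ) / (a (n * h + 1))) ∧
    a (n * k + 1) ≤ Q ∧
    |(-∑ h ∈ Finset.range (k + 1), (a (n * k + 1) : ℝ) / (a (n * h + 1)))
        + (a (n * k + 1) : ℝ) * xiCoord a n 1|
      = (a (n * k + 1) : ℝ) * ∑' h : ℕ, (1 : ℝ) / (a (n * (h + k + 1) + 1)) ∧
    (a (n * k + 1) : ℝ) * ∑' h : ℕ, (1 : ℝ) / (a (n * (h + k + 1) + 1))
      ≤ 2 * (a (n * k + 1) : ℝ) / (a (n * (k + 1) + 1)) := by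
  have F := constr_facts hn hc hM ha
  have posa : ∀ m, 0 < a m := fun m => (F m).1
  have hdvd := constr_dvd_mono F
  have hgrow := constr_grow F
  have h2pow : ∀ m, 2 ^ m ≤ a m := by
    intro m
    have := hgrow 0 m
    simpa [ha.1] using this
  set A := a (n * k + 1) with hA
  have hApos : (0:ℝ) < A := by exact_mod_cast posa _
  -- summability of the basic series
  have hsum0 : Summable (fun h : ℕ => (1:ℝ) / a (n * h + 1)) := by
    apply Summable.of_nonneg_of_le (fun h => by positivity) (fun h => ?_) summable_geometric_two
    have hle : (2:ℝ) ^ h ≤ (a (n * h + 1) : ℝ) := by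
      have h1 : 2 ^ h ≤ 2 ^ (n * h + 1) :=
        Nat.pow_le_pow_right (by norm_num) (by nlinarith)
      exact_mod_cast h1.trans (h2pow (n * h + 1))
    rw [one_div_pow]
    exact one_div_le_one_div_of_le (by positivity) hle
  have hsum : Summable (fun h : ℕ => (A:ℝ) * (1 / a (n * h + 1))) := hsum0.mul_left _
  have key := Summable.sum_add_tsum_nat_add (k + 1) hsum
  have e1 : (A:ℝ) * xiCoord a n 1 = ∑' h : ℕ, (A:ℝ) * (1 / a (n * h + 1)) := by
    rw [xiCoord]; exact tsum_mul_left.symm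
  have e2 : ∑ h ∈ Finset.range (k + 1), (A:ℝ) * (1 / a (n * h + 1))
      = ∑ h ∈ Finset.range (k + 1), (A:ℝ) / a (n * h + 1) := by
    refine Finset.sum_congr rfl fun h _ => ?_
    rw [mul_one_div]
  have e4 : (∑' h : ℕ, (A:ℝ) * (1 / a (n * (h + k + 1) + 1)))
      = (A:ℝ) * ∑' h : ℕ, (1:ℝ) / a (n * (h + k + 1) + 1) := tsum_mul_left
  have e3 : (∑' h : ℕ, (A:ℝ) * (1 / a (n * (h + (k + 1)) + 1)))
      = ∑' h : ℕ, (A:ℝ) * (1 / a (n * (h + k + 1) + 1)) :=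
    tsum_congr fun h => by rw [Nat.add_assoc]
  refine ⟨?_, hQ1, ?_, ?_⟩
  · -- b0 is an integer
    refine ⟨-(∑ h ∈ Finset.range (k + 1), (A / a (n * h + 1) : ℕ) : ℤ), ?_⟩
    rw [Int.cast_neg, neg_inj, Int.cast_sum]
    refine Finset.sum_congr rfl fun h hh => ?_
    rw [Int.cast_natCast]
    have hhk : h ≤ k := by simpa [Nat.lt_succ_iff] using hh
    have hd : a (n * h + 1) ∣ A :=
      hdvd _ _ (by have := Nat.mul_le_mul_left n hhk; omega)
    exact Nat.cast_div hd (Nat.cast_ne_zero.mpr (posa (n * h + 1)).ne')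
  · -- the absolute value computation
    have hmain : (-∑ h ∈ Finset.range (k + 1), (A : ℝ) / (a (n * h + 1)))
        + (A : ℝ) * xiCoord a n 1
        = (A:ℝ) * ∑' h : ℕ, (1:ℝ) / a (n * (h + k + 1) + 1) := by
      rw [e1, ← key, e2, ← e4, ← e3]
      ring
    rw [hmain, abs_of_nonneg]
    apply mul_nonneg hApos.le
    exact tsum_nonneg fun h => by positivity
  · -- the tail estimate
    set B := a (n * (k + 1) + 1) with hB
    have hBpos : (0:ℝ) < B := by exact_mod_cast posa _
    have hb : ∀ h : ℕ, (1:ℝ) / a (n * (h + k + 1) + 1) ≤ (1/2 : ℝ) ^ h * (1 / B) := by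
      intro h
      have hgrow' : 2 ^ h * B ≤ a (n * (h + k + 1) + 1) := by
        have h1 := hgrow (n * (k + 1) + 1) (n * h)
        have idx : n * (k + 1) + 1 + n * h = n * (h + k + 1) + 1 := by ring
        rw [idx] at h1
        have h2 : 2 ^ h * B ≤ 2 ^ (n * h) * B :=
          Nat.mul_le_mul_right _ (Nat.pow_le_pow_right (by norm_num) (by nlinarith))
        exact h2.trans h1
      have hposd : (0:ℝ) < 2 ^ h * (B:ℝ) := by positivity
      calc (1:ℝ) / a (n * (h + k + 1) + 1) ≤ 1 / (2 ^ h * (B:ℝ)) := by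
            apply one_div_le_one_div_of_le hposd
            exact_mod_cast hgrow'
        _ = (1/2 : ℝ) ^ h * (1 / B) := by
            rw [one_div_pow, one_div_mul_one_div]
    have hsRHS : Summable (fun h : ℕ => (1/2 : ℝ) ^ h * (1 / (B:ℝ))) :=
      summable_geometric_two.mul_right _
    have hsLHS : Summable (fun h : ℕ => (1:ℝ) / a (n * (h + k + 1) + 1)) := by
      refine ((summable_nat_add_iff (k + 1)).2 hsum0).congr fun h => ?_
      rw [Nat.add_assoc]
    have htail : (∑' h : ℕ, (1:ℝ) / a (n * (h + k + 1) + 1)) ≤ 2 / B := by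
      calc (∑' h : ℕ, (1:ℝ) / a (n * (h + k + 1) + 1))
          ≤ ∑' h : ℕ, (1/2 : ℝ) ^ h * (1 / B) := Summable.tsum_le_tsum hb hsLHS hsRHS
        _ = 2 * (1 / B) := by rw [tsum_mul_right, tsum_geometric_two]
        _ = 2 / B := by ring
    calc (A:ℝ) * ∑' h : ℕ, (1:ℝ) / a (n * (h + k + 1) + 1)
        ≤ (A:ℝ) * (2 / B) := mul_le_mul_of_nonneg_left htail hApos.le
      _ = 2 * (A:ℝ) / B := by ring
end

section
/- With the construction of §2 (all M_j ≥ 2, sufficiently large initial terms), the vector x = (ξ₁,…,ξₙ) with ξ_j = Σ_{h≥0} 1/a_{nh+j} satisfies ψ*_x(Q) ≤ c(1 + o(1)) Q^{−n} as Q → ∞; consequently Θ*(x) ≤ c. -/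
open Filter Finset

/-- numerator of `a_{nk+j} * S_{j,k}` as a natural number -/
def Pnum (a : ℕ → ℕ) (n j k : ℕ) : ℕ :=
  ∑ h ∈ Finset.range (k + 1), a (n * k + j) / a (n * h + j)

lemma psiStar_nonneg {n : ℕ} (x : Fin n → ℝ) (Q : ℕ) : 0 ≤ psiStar x Q := by
  apply le_csInf
  · refine ⟨_, fun i => if i = 0 then 1 else 0, ?_, ?_, rfl⟩
    · intro h
      have := congrFun h 0
      simp at this
    · intro i
      simp [Fin.succ_ne_zero]
  · rintro r ⟨b, -, -, rfl⟩
    exact abs_nonneg _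

lemma psiStar_le {n : ℕ} (x : Fin n → ℝ) (Q : ℕ) (b : Fin (n + 1) → ℤ) (hb : b ≠ 0)
    (hle : ∀ i : Fin n, |b i.succ| ≤ (Q : ℤ)) :
    psiStar x Q ≤ |(b 0 : ℝ) + ∑ i : Fin n, (b i.succ : ℝ) * x i| := by
  apply csInf_le
  · exact ⟨0, by rintro r ⟨b', -, -, rfl⟩; exact abs_nonneg _⟩
  · exact ⟨b, hb, hle, rfl⟩

namespace ThetaAux

variable {n : ℕ} {c : ℝ} {M : ℕ → ℕ} {a : ℕ → ℕ}

lemma decomp {n m : ℕ} (hn : 1 ≤ n) (hm : n < m) :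
    ∃ k j, 1 ≤ k ∧ 1 ≤ j ∧ j ≤ n ∧ m = n * k + j := by
  obtain ⟨m', rfl⟩ : ∃ m', m = m' + 1 := ⟨m - 1, by omega⟩
  refine ⟨m' / n, m' % n + 1, ?_, by omega, ?_, ?_⟩
  · exact (Nat.one_le_div_iff (by omega)).mpr (by omega)
  · have := Nat.mod_lt m' (show 0 < n by omega); omega
  · have := Nat.div_add_mod m' n; omega

section Struct
variable (hn : 2 ≤ n) (hc0 : 0 < c) (hc1 : c < 1) (ha : IsConstrSeq n c M a)
  (hM : ∀ k, n + 2 ≤ M k)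

include hn ha

lemma a_pow {k j : ℕ} (hk : 1 ≤ k) (hj1 : 1 ≤ j) (hjn : j ≤ n - 1) :
    a (n * k + j) = a (n * k + 1) ^ j := by
  rcases eq_or_lt_of_le hj1 with h | h
  · rw [← h, pow_one]
  · exact ha.2.2.2.1 k hk j (by omega) hjn

lemma a_top {k : ℕ} (hk : 1 ≤ k) :
    a (n * k + n) = ⌈c⁻¹ * (a (n * k + 1) : ℝ)⌉₊ * a (n * k + 1) ^ (n - 1) := by
  have h1 : n * k + n - 1 = n * k + (n - 1) := by omega
  have := ha.2.2.2.2 k hk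
  rw [h1, a_pow hn ha hk (by omega) le_rfl] at this
  exact this

lemma a_succA {k : ℕ} : a (n * (k + 1) + 1) = a (n * k + n) ^ M (k + 1) := by
  have := ha.2.2.1 (k + 1) (by omega)
  rwa [show n * (k + 1) = n * k + n by ring] at this

include hc0 hc1 hM in
lemma two_le : ∀ m, 1 ≤ m → 2 ≤ a m := by
  intro m
  induction m using Nat.strong_induction_on with
  | _ m ih =>
    intro hm
    rcases le_or_gt m n with h | h
    · rw [ha.2.1 m hm h]
      have := Nat.one_le_iff_ne_zero.mpr (Nat.factorial_ne_zero m)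
      omega
    · obtain ⟨k, j, hk, hj1, hjn, rfl⟩ := decomp (by omega) h
      have hnk : 1 ≤ n * k := by nlinarith
      by_cases hj : j = n
      · rw [hj, a_top hn ha hk]
        have h2 : 2 ≤ a (n * k + 1) := ih (n * k + 1) (by omega) (by omega)
        have hD : 1 ≤ ⌈c⁻¹ * (a (n * k + 1) : ℝ)⌉₊ := by
          rw [Nat.one_le_iff_ne_zero, ← Nat.pos_iff_ne_zero, Nat.ceil_pos]
          positivity
        have hA : 2 ≤ a (n * k + 1) ^ (n - 1) := by
          calc 2 ≤ a (n * k + 1) ^ 1 := by simpa using h2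
          _ ≤ a (n * k + 1) ^ (n - 1) := Nat.pow_le_pow_right (by omega) (by omega)
        calc 2 ≤ 1 * 2 := by omega
        _ ≤ ⌈c⁻¹ * (a (n * k + 1) : ℝ)⌉₊ * a (n * k + 1) ^ (n - 1) :=
          Nat.mul_le_mul hD hA
      · by_cases hj1' : j = 1
        · subst hj1'
          rw [ha.2.2.1 k hk]
          have h2 : 2 ≤ a (n * k) := ih (n * k) (by omega) hnk
          calc 2 ≤ a (n * k) ^ 1 := by simpa using h2
          _ ≤ a (n * k) ^ M k := Nat.pow_le_pow_right (by omega) (by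
            have := hM k; omega)
        · rw [a_pow hn ha hk hj1 (by omega)]
          have h2 : 2 ≤ a (n * k + 1) := ih (n * k + 1) (by omega) (by omega)
          calc 2 ≤ a (n * k + 1) ^ 1 := by simpa using h2
          _ ≤ a (n * k + 1) ^ j := Nat.pow_le_pow_right (by omega) (by omega)

include hc0 hc1 hM in
lemma a_pos : ∀ m, 0 < a m := by
  intro m
  rcases Nat.eq_zero_or_pos m with h | h
  · rw [h, ha.1]; norm_num
  · have := two_le hn hc0 hc1 ha hM m h; omega

end Struct
section Struct2
variable (hn : 2 ≤ n) (hc0 : 0 < c) (hc1 : c < 1) (ha : IsConstrSeq n c M a)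
  (hM : ∀ k, n + 2 ≤ M k)

include hn hc0 hc1 ha hM

lemma a_succ_lt : ∀ m, a m < a (m + 1) := by
  have h2 := two_le hn hc0 hc1 ha hM
  intro m
  rcases Nat.eq_zero_or_pos m with rfl | hm
  · rw [ha.1, ha.2.1 1 le_rfl (by omega)]; simp [Nat.factorial]
  rcases lt_or_ge m n with h | h
  · rw [ha.2.1 m hm (by omega), ha.2.1 (m+1) (by omega) (by omega)]
    have : Nat.factorial m < Nat.factorial (m+1) := by
      rw [Nat.factorial_succ]
      have := Nat.factorial_pos m
      nlinarith
    omega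
  rcases eq_or_lt_of_le h with h' | h'
  · -- m = n
    have e1 : a (n * 1 + 1) = a (n * 1) ^ M 1 := ha.2.2.1 1 le_rfl
    rw [mul_one, h'] at e1
    have hb : 2 ≤ a m := h2 m hm
    calc a m = a m ^ 1 := (pow_one _).symm
    _ < a m ^ M 1 := Nat.pow_lt_pow_right hb (by have := hM 1; omega)
    _ = a (m + 1) := e1.symm
  · obtain ⟨k, j, hk, hj1, hjn, rfl⟩ := decomp (by omega) h'
    have hA2 : 2 ≤ a (n * k + 1) := h2 _ (by omega)
    rcases lt_or_ge j (n - 1) with hj | hj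
    · -- j ≤ n - 2 : A^j < A^(j+1)
      rw [a_pow hn ha hk hj1 (by omega), show n*k+j+1 = n*k+(j+1) by ring,
        a_pow (k := k) (j := j+1) hn ha hk (by omega) (by omega)]
      exact Nat.pow_lt_pow_right hA2 (by omega)
    rcases eq_or_lt_of_le hjn with hj' | hj'
    · -- j = n
      rw [hj']
      have e1 : a (n * (k+1) + 1) = a (n * k + n) ^ M (k+1) := a_succA hn ha
      have hb : 2 ≤ a (n * k + n) := h2 _ (by omega)
      calc a (n*k+n) = a (n*k+n) ^ 1 := (pow_one _).symm
      _ < a (n*k+n) ^ M (k+1) := Nat.pow_lt_pow_right hb (by have := hM (k+1); omega)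
      _ = a (n*k+n+1) := by rw [show n*k+n+1 = n*(k+1)+1 by ring, e1]
    · -- j = n - 1
      have hj'' : j = n - 1 := by omega
      rw [hj'', show n*k+(n-1)+1 = n*k+n by omega, a_top hn ha hk,
        a_pow hn ha hk (by omega) le_rfl]
      have hD : 1 < ⌈c⁻¹ * (a (n * k + 1) : ℝ)⌉₊ := by
        rw [Nat.lt_ceil]
        have h1c : (1:ℝ) < c⁻¹ := (one_lt_inv₀ hc0).mpr hc1
        have : (2:ℝ) ≤ (a (n*k+1) : ℝ) := by exact_mod_cast hA2
        nlinarith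
      have hp : 0 < a (n * k + 1) ^ (n-1) := Nat.pow_pos (by omega)
      nlinarith
lemma a_mono : StrictMono a := strictMono_nat_of_lt_succ (a_succ_lt hn hc0 hc1 ha hM)

lemma dvd_step : ∀ h j, 1 ≤ j → j ≤ n → a (n * h + j) ∣ a (n * (h + 1) + j) := by
  intro h j hj1 hjn
  have hMpos : ∀ k, 1 ≤ M k := fun k => by have := hM k; omega
  rcases Nat.eq_zero_or_pos h with rfl | hh
  · -- base block
    simp only [Nat.mul_zero, Nat.zero_add, Nat.mul_one]
    have e1 : a (n * 1 + 1) = a (n * 1) ^ M 1 := ha.2.2.1 1 le_rfl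
    have hanj : a j = 8 * Nat.factorial j := ha.2.1 j hj1 hjn
    have hann : a n = 8 * Nat.factorial n := ha.2.1 n (by omega) le_rfl
    have hdvd0 : a j ∣ a (n * 1 + 1) := by
      rw [e1, mul_one, hanj, hann]
      exact dvd_pow (mul_dvd_mul_left 8 (Nat.factorial_dvd_factorial hjn))
        (by have := hMpos 1; omega)
    rcases eq_or_lt_of_le hjn with h' | h'
    · -- j = n
      rw [h'] at hdvd0 ⊢
      have e2 := a_top hn ha (k := 1) le_rfl
      rw [show n*1+n = n+n by ring] at e2
      rw [e2]
      refine Dvd.dvd.mul_left ?_ _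
      exact hdvd0.trans (dvd_pow_self _ (by omega))
    · -- j ≤ n - 1
      have e2 : a (n * 1 + j) = a (n * 1 + 1) ^ j := a_pow hn ha le_rfl hj1 (by omega)
      rw [show n + j = n*1 + j by ring, e2]
      exact hdvd0.trans (dvd_pow_self _ (by omega))
  · -- h ≥ 1
    have hAA : a (n * h + 1) ∣ a (n * (h+1) + 1) := by
      have e1 : a (n * (h+1) + 1) = a (n * h + n) ^ M (h+1) := a_succA hn ha
      have e2 := a_top hn ha hh
      calc a (n*h+1) ∣ a (n*h+1) ^ (n-1) := dvd_pow_self _ (by omega)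
      _ ∣ a (n*h+n) := by rw [e2]; exact Dvd.dvd.mul_left dvd_rfl _
      _ ∣ a (n*h+n) ^ M (h+1) := dvd_pow_self _ (by have := hMpos (h+1); omega)
      _ = a (n * (h+1) + 1) := e1.symm
    rcases eq_or_lt_of_le hjn with h' | h'
    · -- j = n
      rw [h']
      have e1 : a (n * (h+1) + 1) = a (n * h + n) ^ M (h+1) := a_succA hn ha
      have e2 := a_top hn ha (k := h+1) (by omega)
      calc a (n*h+n) ∣ a (n*h+n) ^ M (h+1) := dvd_pow_self _ (by have := hMpos (h+1); omega)
      _ = a (n*(h+1)+1) := e1.symm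
      _ ∣ a (n*(h+1)+1) ^ (n-1) := dvd_pow_self _ (by omega)
      _ ∣ a (n*(h+1)+n) := by rw [e2]; exact Dvd.dvd.mul_left dvd_rfl _
    · rw [a_pow hn ha hh hj1 (by omega), a_pow hn ha (by omega) hj1 (by omega)]
      exact pow_dvd_pow_of_dvd hAA j

lemma dvd_chain {h k j : ℕ} (hj1 : 1 ≤ j) (hjn : j ≤ n) (hhk : h ≤ k) :
    a (n * h + j) ∣ a (n * k + j) := by
  induction k, hhk using Nat.le_induction with
  | base => exact dvd_rfl
  | succ k hk ih => exact ih.trans (dvd_step hn hc0 hc1 ha hM k j hj1 hjn)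

lemma twice_step {h j : ℕ} (hj1 : 1 ≤ j) (hjn : j ≤ n) :
    2 * a (n * h + j) ≤ a (n * (h + 1) + j) := by
  obtain ⟨t, ht⟩ := dvd_step hn hc0 hc1 ha hM h j hj1 hjn
  have hlt : a (n * h + j) < a (n * (h+1) + j) :=
    a_mono hn hc0 hc1 ha hM (by nlinarith)
  have hpos : 0 < a (n * h + j) := a_pos hn hc0 hc1 ha hM _
  rcases Nat.lt_or_ge t 2 with h2 | h2
  · interval_cases t <;> omega
  · calc 2 * a (n*h+j) ≤ a (n*h+j) * t := by nlinarith
    _ = a (n * (h+1) + j) := ht.symm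

lemma geom_growth {K j : ℕ} (hj1 : 1 ≤ j) (hjn : j ≤ n) :
    ∀ i, 2 ^ i * a (n * K + j) ≤ a (n * (K + i) + j) := by
  intro i
  induction i with
  | zero => simp
  | succ i ih =>
    have := twice_step hn hc0 hc1 ha hM (h := K + i) hj1 hjn
    calc 2 ^ (i+1) * a (n*K+j) = 2 * (2 ^ i * a (n*K+j)) := by ring
    _ ≤ 2 * a (n * (K+i) + j) := by omega
    _ ≤ a (n * (K + (i+1)) + j) := by rw [show K + (i+1) = (K + i) + 1 by ring]; exact this

end Struct2

section Analytic
variable (hn : 2 ≤ n) (hc0 : 0 < c) (hc1 : c < 1) (ha : IsConstrSeq n c M a)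
  (hM : ∀ k, n + 2 ≤ M k)

include hn hc0 hc1 ha hM

lemma summable_aux {j : ℕ} (hj1 : 1 ≤ j) (hjn : j ≤ n) :
    Summable (fun h : ℕ => (1 : ℝ) / (a (n * h + j))) := by
  refine Summable.of_nonneg_of_le (fun h => by positivity) (fun h => ?_)
    summable_geometric_two
  have h1 : 2 ^ h ≤ a (n * h + j) := by
    have := geom_growth hn hc0 hc1 ha hM (K := 0) hj1 hjn h
    have hpos : 1 ≤ a (n * 0 + j) := a_pos hn hc0 hc1 ha hM _
    calc 2 ^ h = 2 ^ h * 1 := by ring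
    _ ≤ 2 ^ h * a (n * 0 + j) := by exact Nat.mul_le_mul_left _ hpos
    _ ≤ a (n * (0 + h) + j) := this
    _ = a (n * h + j) := by rw [Nat.zero_add]
  rw [div_pow, one_pow]
  apply one_div_le_one_div_of_le (by positivity)
  exact_mod_cast h1

lemma tail_le {j k : ℕ} (hj1 : 1 ≤ j) (hjn : j ≤ n) :
    ∑' h : ℕ, (1 : ℝ) / (a (n * (h + (k+1)) + j)) ≤ 2 / (a (n * (k+1) + j)) := by
  have hs2 : Summable (fun h : ℕ => (1/2 : ℝ) ^ h * (1 / a (n * (k+1) + j))) :=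
    summable_geometric_two.mul_right _
  have hs1 : Summable (fun h : ℕ => (1 : ℝ) / (a (n * (h + (k+1)) + j))) :=
    (summable_aux hn hc0 hc1 ha hM hj1 hjn).comp_injective
      (fun x y hxy => by omega)
  have hle : ∀ h : ℕ, (1 : ℝ) / (a (n * (h + (k+1)) + j)) ≤
      (1/2 : ℝ) ^ h * (1 / a (n * (k+1) + j)) := by
    intro h
    have hg := geom_growth hn hc0 hc1 ha hM (K := k+1) hj1 hjn h
    rw [show (k+1) + h = h + (k+1) by ring] at hg
    have hpos : (0:ℝ) < a (n * (k+1) + j) := by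
      exact_mod_cast a_pos hn hc0 hc1 ha hM _
    have heq : (1/2:ℝ)^h * (1 / (a (n*(k+1)+j) : ℝ)) =
        1 / ((2:ℝ)^h * (a (n*(k+1)+j) : ℝ)) := by
      rw [div_pow, one_pow, div_mul_div_comm, one_mul]
    rw [heq]
    apply one_div_le_one_div_of_le (by positivity)
    exact_mod_cast hg
  calc ∑' h : ℕ, (1 : ℝ) / (a (n * (h + (k+1)) + j)) ≤
      ∑' h : ℕ, (1/2 : ℝ) ^ h * (1 / a (n * (k+1) + j)) := Summable.tsum_le_tsum hle hs1 hs2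
  _ = 2 * (1 / a (n * (k+1) + j)) := by rw [tsum_mul_right, tsum_geometric_two]
  _ = 2 / a (n * (k+1) + j) := by ring

lemma tail_pos {j k : ℕ} (hj1 : 1 ≤ j) (hjn : j ≤ n) :
    0 < ∑' h : ℕ, (1 : ℝ) / (a (n * (h + (k+1)) + j)) := by
  have hs1 : Summable (fun h : ℕ => (1 : ℝ) / (a (n * (h + (k+1)) + j))) :=
    (summable_aux hn hc0 hc1 ha hM hj1 hjn).comp_injective (fun x y hxy => by omega)
  refine Summable.tsum_pos hs1 (fun i => by positivity) 0 ?_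
  have : (0:ℝ) < a (n * (0 + (k+1)) + j) := by
    exact_mod_cast a_pos hn hc0 hc1 ha hM _
  positivity

lemma xi_split (j k : ℕ) (hj1 : 1 ≤ j) (hjn : j ≤ n) :
    xiCoord a n j = ((Spartial a n j k : ℚ) : ℝ) +
      ∑' h : ℕ, (1 : ℝ) / (a (n * (h + (k+1)) + j)) := by
  have hs := summable_aux hn hc0 hc1 ha hM hj1 hjn
  have := Summable.sum_add_tsum_nat_add (f := fun h : ℕ => (1 : ℝ) / (a (n * h + j))) (k+1) hs
  rw [xiCoord, ← this]
  congr 1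
  rw [Spartial]
  push_cast
  rfl

lemma Pnum_eq (j k : ℕ) (hj1 : 1 ≤ j) (hjn : j ≤ n) :
    ((Pnum a n j k : ℕ) : ℝ) = (a (n * k + j) : ℝ) * ((Spartial a n j k : ℚ) : ℝ) := by
  have : ((Pnum a n j k : ℕ) : ℚ) = (a (n * k + j) : ℚ) * Spartial a n j k := by
    rw [Pnum, Spartial, Nat.cast_sum, Finset.mul_sum]
    apply Finset.sum_congr rfl
    intro h hh
    have hd : a (n * h + j) ∣ a (n * k + j) :=
      dvd_chain hn hc0 hc1 ha hM hj1 hjn (by simp at hh; omega)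
    have hne : ((a (n * h + j) : ℚ)) ≠ 0 := by
      have := a_pos hn hc0 hc1 ha hM (n * h + j); positivity
    rw [Nat.cast_div hd hne, mul_one_div]
  calc ((Pnum a n j k : ℕ) : ℝ) = (((Pnum a n j k : ℕ) : ℚ) : ℝ) := by norm_num
  _ = (a (n * k + j) : ℝ) * ((Spartial a n j k : ℚ) : ℝ) := by rw [this]; push_cast; ring

lemma Pnum_pos (j k : ℕ) (hj1 : 1 ≤ j) (hjn : j ≤ n) : 0 < Pnum a n j k := by
  rw [Pnum]
  apply Finset.sum_pos'
  · intro h hh; exact Nat.zero_le _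
  · refine ⟨k, by simp, ?_⟩
    have := a_pos hn hc0 hc1 ha hM (n * k + j)
    exact Nat.div_pos (Nat.le_refl _) this

end Analytic

section Est
variable (hn : 2 ≤ n) (hc0 : 0 < c) (hc1 : c < 1) (ha : IsConstrSeq n c M a)
  (hM : ∀ k, n + 2 ≤ M k)

include hn hc0 hc1 ha hM

lemma single_est {j k Q : ℕ} (hj1 : 1 ≤ j) (hjn : j ≤ n) (hQ : a (n*k+j) ≤ Q) :
    psiStar (xVec a n) Q ≤ (a (n*k+j) : ℝ) * (2 / a (n*(k+1)+j)) := by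
  classical
  set b : Fin (n+1) → ℤ := fun m => if (m:ℕ) = 0 then -(Pnum a n j k : ℤ)
    else if (m:ℕ) = j then (a (n*k+j) : ℤ) else 0 with hbdef
  have hb0 : b 0 = -(Pnum a n j k : ℤ) := by simp [hbdef]
  have hbne : b ≠ 0 := by
    intro h
    have h0 := congrFun h 0
    rw [hb0] at h0
    have hp := Pnum_pos hn hc0 hc1 ha hM j k hj1 hjn
    simp only [Pi.zero_apply, neg_eq_zero] at h0
    exact_mod_cast absurd h0 (by exact_mod_cast Nat.pos_iff_ne_zero.mp hp)
  have hle : ∀ i : Fin n, |b i.succ| ≤ (Q : ℤ) := by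
    intro i
    have hsv : ((i.succ : Fin (n+1)) : ℕ) = (i:ℕ) + 1 := Fin.val_succ i
    simp only [hbdef, hsv]
    by_cases hij : (i:ℕ) + 1 = j
    · simp only [hij, if_neg (by omega : ¬ j = 0), if_pos rfl]
      rw [abs_of_nonneg (by positivity)]
      exact_mod_cast hQ
    · rw [if_neg (by omega : ¬ (i:ℕ) + 1 = 0), if_neg hij]
      simp
  have hsum : ∑ i : Fin n, (b i.succ : ℝ) * xVec a n i
      = (a (n*k+j) : ℝ) * xiCoord a n j := by
    have hj0 : j - 1 < n := by omega
    rw [Fintype.sum_eq_single (⟨j-1, hj0⟩ : Fin n)]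
    · have hsucc : ((Fin.succ ⟨j-1, hj0⟩ : Fin (n+1)) : ℕ) = j := by
        simp only [Fin.val_succ, Fin.val_mk]; omega
      simp only [hbdef, hsucc, if_neg (by omega : ¬ j = 0), if_pos rfl]
      have hx : xVec a n ⟨j-1, hj0⟩ = xiCoord a n j := by
        rw [xVec]; simp only [Fin.val_mk]; congr 1 <;> omega
      rw [hx]; norm_num
    · intro i hi
      have hiv : ((i.succ : Fin (n+1)) : ℕ) = (i:ℕ) + 1 := Fin.val_succ i
      have hij : ¬ ((i:ℕ) + 1 = j) := by
        intro hcon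
        apply hi
        apply Fin.ext
        simp only [Fin.val_mk]
        omega
      simp only [hbdef, hiv, if_neg (by omega : ¬ (i:ℕ) + 1 = 0), if_neg hij]
      simp
  have hval := psiStar_le (xVec a n) Q b hbne hle
  rw [hsum, hb0] at hval
  refine hval.trans ?_
  rw [xi_split hn hc0 hc1 ha hM j k hj1 hjn,
    mul_add, ← Pnum_eq hn hc0 hc1 ha hM j k hj1 hjn]
  have htp := tail_pos hn hc0 hc1 ha hM (j := j) (k := k) hj1 hjn
  have htl := tail_le hn hc0 hc1 ha hM (j := j) (k := k) hj1 hjn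
  have hap : (0:ℝ) ≤ (a (n*k+j) : ℝ) := by positivity
  push_cast
  rw [show -(Pnum a n j k : ℝ) + ((Pnum a n j k : ℝ) +
      (a (n*k+j):ℝ) * ∑' h : ℕ, (1:ℝ) / (a (n*(h+(k+1))+j))) =
      (a (n*k+j):ℝ) * ∑' h : ℕ, (1:ℝ) / (a (n*(h+(k+1))+j)) by ring]
  rw [abs_of_nonneg (by positivity)]
  exact mul_le_mul_of_nonneg_left htl hap

lemma cB_ge {k : ℕ} (hk : 1 ≤ k) :
    ((a (n*k+1) : ℝ))^n ≤ c * a (n*k+n) := by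
  have e := a_top hn ha hk
  have hD : c⁻¹ * (a (n*k+1) : ℝ) ≤ (⌈c⁻¹ * (a (n*k+1) : ℝ)⌉₊ : ℝ) := Nat.le_ceil _
  have hcast : (a (n*k+n) : ℝ) =
      (⌈c⁻¹ * (a (n*k+1) : ℝ)⌉₊ : ℝ) * (a (n*k+1) : ℝ)^(n-1) := by
    rw [e]; push_cast; ring
  have hpow : ((a (n*k+1) : ℝ))^n = (a (n*k+1) : ℝ) * (a (n*k+1) : ℝ)^(n-1) := by
    rw [← pow_succ']; congr 1; omega
  rw [hcast, hpow]
  have hApos : (0:ℝ) < (a (n*k+1) : ℝ) := by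
    exact_mod_cast a_pos hn hc0 hc1 ha hM _
  calc (a (n*k+1) : ℝ) * (a (n*k+1) : ℝ)^(n-1)
      = c * (c⁻¹ * (a (n*k+1) : ℝ)) * (a (n*k+1) : ℝ)^(n-1) := by
        rw [show c * (c⁻¹ * (a (n*k+1) : ℝ)) * (a (n*k+1) : ℝ)^(n-1)
            = (c * c⁻¹) * ((a (n*k+1) : ℝ) * (a (n*k+1) : ℝ)^(n-1)) from by ring,
          mul_inv_cancel₀ (ne_of_gt hc0), one_mul]
    _ ≤ c * (⌈c⁻¹ * (a (n*k+1) : ℝ)⌉₊ : ℝ) * (a (n*k+1) : ℝ)^(n-1) := by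
        have h0 : (0:ℝ) ≤ c := le_of_lt hc0
        gcongr
    _ = c * ((⌈c⁻¹ * (a (n*k+1) : ℝ)⌉₊ : ℝ) * (a (n*k+1) : ℝ)^(n-1)) := by ring

lemma B_le {k : ℕ} (hk : 1 ≤ k) :
    (a (n*k+n) : ℝ) ≤ (2/c) * ((a (n*k+1) : ℝ))^n := by
  have e := a_top hn ha hk
  have hApos : (1:ℝ) ≤ (a (n*k+1) : ℝ) := by
    exact_mod_cast a_pos hn hc0 hc1 ha hM (n*k+1)
  have harg : (0:ℝ) ≤ c⁻¹ * (a (n*k+1) : ℝ) := by positivity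
  have hD : (⌈c⁻¹ * (a (n*k+1) : ℝ)⌉₊ : ℝ) < c⁻¹ * (a (n*k+1) : ℝ) + 1 :=
    Nat.ceil_lt_add_one harg
  have h1 : (1:ℝ) ≤ c⁻¹ * (a (n*k+1) : ℝ) := by
    have : (1:ℝ) ≤ c⁻¹ := (one_le_inv₀ hc0).mpr (le_of_lt hc1)
    nlinarith
  have hcast : (a (n*k+n) : ℝ) =
      (⌈c⁻¹ * (a (n*k+1) : ℝ)⌉₊ : ℝ) * (a (n*k+1) : ℝ)^(n-1) := by
    rw [e]; push_cast; ring
  have hpow : ((a (n*k+1) : ℝ))^n = (a (n*k+1) : ℝ) * (a (n*k+1) : ℝ)^(n-1) := by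
    rw [← pow_succ']; congr 1; omega
  rw [hcast, hpow]
  have hpp : (0:ℝ) ≤ (a (n*k+1) : ℝ)^(n-1) := by positivity
  have h2 : (⌈c⁻¹ * (a (n*k+1) : ℝ)⌉₊ : ℝ) ≤ (2/c) * (a (n*k+1) : ℝ) := by
    have : (2/c) * (a (n*k+1) : ℝ) = c⁻¹ * (a (n*k+1) : ℝ) + c⁻¹ * (a (n*k+1) : ℝ) := by
      field_simp; ring
    nlinarith
  nlinarith

lemma A'_ge {k : ℕ} (hk : 1 ≤ k) :
    ((a (n*k+1) : ℝ))^(n*(n+2)) ≤ (a (n*(k+1)+1) : ℝ) := by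
  have e : a (n*(k+1)+1) = a (n*k+n) ^ M (k+1) := a_succA hn ha
  have hBA : ((a (n*k+1) : ℝ))^n ≤ (a (n*k+n) : ℝ) := by
    have h1 := cB_ge hn hc0 hc1 ha hM hk
    have hBpos : (0:ℝ) ≤ (a (n*k+n) : ℝ) := by positivity
    nlinarith
  have hB1 : (1:ℝ) ≤ (a (n*k+n) : ℝ) := by
    exact_mod_cast a_pos hn hc0 hc1 ha hM (n*k+n)
  calc ((a (n*k+1) : ℝ))^(n*(n+2)) = (((a (n*k+1) : ℝ))^n)^(n+2) := by
        rw [← pow_mul]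
    _ ≤ ((a (n*k+n) : ℝ))^(n+2) := by
        apply pow_le_pow_left₀ (by positivity) hBA
    _ ≤ ((a (n*k+n) : ℝ))^(M (k+1)) := by
        apply pow_le_pow_right₀ hB1 (hM (k+1))
    _ = (a (n*(k+1)+1) : ℝ) := by rw [e]; push_cast; ring

lemma caseI_est {k Q : ℕ} (hk : 1 ≤ k) {ε : ℝ} (hε : 0 ≤ ε)
    (hC1 : 2*(2/c)^n/c ≤ (a (n*k+1) : ℝ))
    (hQ1 : a (n*k+1) ≤ Q) (hQB : Q < a (n*k+n)) :
    psiStar (xVec a n) Q ≤ c * (1+ε) / (Q:ℝ)^n := by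
  have hest := single_est hn hc0 hc1 ha hM (j := 1) (k := k) le_rfl (by omega) hQ1
  refine hest.trans ?_
  have hA1 : (1:ℝ) ≤ (a (n*k+1) : ℝ) := by
    exact_mod_cast a_pos hn hc0 hc1 ha hM (n*k+1)
  have hQ0 : (1:ℝ) ≤ (Q:ℝ) := le_trans hA1 (by exact_mod_cast hQ1)
  have hA'0 : (0:ℝ) < (a (n*(k+1)+1) : ℝ) := by
    exact_mod_cast a_pos hn hc0 hc1 ha hM (n*(k+1)+1)
  have hQn : (0:ℝ) < (Q:ℝ)^n := by positivity
  have hQB' : (Q:ℝ) ≤ (a (n*k+n) : ℝ) := by exact_mod_cast le_of_lt hQB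
  have hQpow : (Q:ℝ)^n ≤ (2/c)^n * (a (n*k+1) : ℝ)^(n*n) := by
    calc (Q:ℝ)^n ≤ ((2/c) * (a (n*k+1) : ℝ)^n)^n :=
          pow_le_pow_left₀ (by positivity) (hQB'.trans (B_le hn hc0 hc1 ha hM hk)) n
    _ = (2/c)^n * ((a (n*k+1) : ℝ)^n)^n := mul_pow _ _ n
    _ = (2/c)^n * (a (n*k+1) : ℝ)^(n*n) := by rw [← pow_mul]
  have hCA : 2*(2/c)^n ≤ c * (a (n*k+1) : ℝ) := by
    have := (div_le_iff₀ hc0).mp hC1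
    linarith
  have key : 2 * (a (n*k+1) : ℝ) * (Q:ℝ)^n ≤ c * (a (n*(k+1)+1) : ℝ) := by
    calc 2 * (a (n*k+1) : ℝ) * (Q:ℝ)^n
        ≤ 2 * (a (n*k+1) : ℝ) * ((2/c)^n * (a (n*k+1) : ℝ)^(n*n)) := by
          have h2A : (0:ℝ) ≤ 2 * (a (n*k+1) : ℝ) := by positivity
          exact mul_le_mul_of_nonneg_left hQpow h2A
    _ = (2*(2/c)^n) * ((a (n*k+1) : ℝ) * (a (n*k+1) : ℝ)^(n*n)) := by ring
    _ = (2*(2/c)^n) * (a (n*k+1) : ℝ)^(n*n+1) := by rw [← pow_succ']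
    _ ≤ (c * (a (n*k+1) : ℝ)) * (a (n*k+1) : ℝ)^(n*n+1) :=
          mul_le_mul_of_nonneg_right hCA (by positivity)
    _ = c * (a (n*k+1) : ℝ)^(n*n+2) := by
          rw [mul_assoc, ← pow_succ']
    _ ≤ c * (a (n*k+1) : ℝ)^(n*(n+2)) := by
          have := pow_le_pow_right₀ hA1 (show n*n+2 ≤ n*(n+2) by nlinarith)
          nlinarith
    _ ≤ c * (a (n*(k+1)+1) : ℝ) := by
          have := A'_ge hn hc0 hc1 ha hM hk
          nlinarith
  have heq : (a (n*k+1) : ℝ) * (2 / (a (n*(k+1)+1) : ℝ))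
      = 2 * (a (n*k+1) : ℝ) / (a (n*(k+1)+1) : ℝ) := by ring
  rw [heq, div_le_div_iff₀ hA'0 hQn]
  have hcc : c * (a (n*(k+1)+1) : ℝ) ≤ c * (1+ε) * (a (n*(k+1)+1) : ℝ) := by
    nlinarith [mul_nonneg (mul_nonneg (le_of_lt hc0) hε) (le_of_lt hA'0)]
  linarith

lemma caseII_est {k Q : ℕ} (hk : 1 ≤ k) {ε : ℝ} (hε : 0 ≤ ε)
    (hQB : a (n*k+n) ≤ Q) (hQA : Q*Q < a (n*(k+1)+1)) :
    psiStar (xVec a n) Q ≤ c * (1+ε) / (Q:ℝ)^n := by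
  have hest := single_est hn hc0 hc1 ha hM (j := n) (k := k) (by omega) le_rfl hQB
  refine hest.trans ?_
  have hB2 : (2:ℝ) ≤ (a (n*k+n) : ℝ) := by
    exact_mod_cast two_le hn hc0 hc1 ha hM (n*k+n) (by omega)
  have hQ2 : (2:ℝ) ≤ (Q:ℝ) := hB2.trans (by exact_mod_cast hQB)
  have hB'0 : (0:ℝ) < (a (n*(k+1)+n) : ℝ) := by
    exact_mod_cast a_pos hn hc0 hc1 ha hM (n*(k+1)+n)
  have hQn : (0:ℝ) < (Q:ℝ)^n := by positivity
  have hQB' : (a (n*k+n) : ℝ) ≤ (Q:ℝ) := by exact_mod_cast hQB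
  have hQQ : ((Q:ℝ) * (Q:ℝ)) ≤ (a (n*(k+1)+1) : ℝ) := by
    have : ((Q*Q : ℕ) : ℝ) ≤ (a (n*(k+1)+1) : ℝ) := by exact_mod_cast le_of_lt hQA
    push_cast at this; linarith
  have key : 2 * (a (n*k+n) : ℝ) * (Q:ℝ)^n ≤ c * (a (n*(k+1)+n) : ℝ) := by
    have h2B : 2 * (a (n*k+n) : ℝ) ≤ (Q:ℝ) * (Q:ℝ) := by nlinarith
    calc 2 * (a (n*k+n) : ℝ) * (Q:ℝ)^n
        ≤ ((Q:ℝ) * (Q:ℝ)) * (Q:ℝ)^n := mul_le_mul_of_nonneg_right h2B (le_of_lt hQn)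
    _ = (Q:ℝ)^(n+2) := by ring
    _ ≤ (Q:ℝ)^(2*n) := pow_le_pow_right₀ (by linarith) (by omega)
    _ = ((Q:ℝ) * (Q:ℝ))^n := by rw [← sq, ← pow_mul, Nat.mul_comm]
    _ ≤ ((a (n*(k+1)+1) : ℝ))^n := pow_le_pow_left₀ (by positivity) hQQ n
    _ ≤ c * (a (n*(k+1)+n) : ℝ) := cB_ge hn hc0 hc1 ha hM (by omega)
  have heq : (a (n*k+n) : ℝ) * (2 / (a (n*(k+1)+n) : ℝ))
      = 2 * (a (n*k+n) : ℝ) / (a (n*(k+1)+n) : ℝ) := by ring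
  rw [heq, div_le_div_iff₀ hB'0 hQn]
  have hcc : c * (a (n*(k+1)+n) : ℝ) ≤ c * (1+ε) * (a (n*(k+1)+n) : ℝ) := by
    nlinarith [mul_nonneg (mul_nonneg (le_of_lt hc0) hε) (le_of_lt hB'0)]
  linarith

set_option maxHeartbeats 1600000 in
lemma caseIII_est {k Q : ℕ} (hk : 1 ≤ k) {ε : ℝ} (hε : 0 < ε)
    (hC2 : 4/(c*ε) ≤ (a (n*k+1) : ℝ))
    (hQB : a (n*k+n) ≤ Q) (hQA : Q < a (n*(k+1)+1)) (hQQ : a (n*(k+1)+1) ≤ Q*Q) :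
    psiStar (xVec a n) Q ≤ c * (1+ε) / (Q:ℝ)^n := by
  classical
  -- ℕ-level objects
  set A := a (n*k+1) with hAdef
  set B := a (n*k+n) with hBdef
  set A' := a (n*(k+1)+1) with hA'def
  set B' := a (n*(k+1)+n) with hB'def
  set A'' := a (n*(k+1+1)+1) with hA''def
  set B'' := a (n*(k+1+1)+n) with hB''def
  set P := Pnum a n n k with hPdef
  set P1 := Pnum a n 1 k with hP1def
  have hM' : n + 2 ≤ M (k+1) := hM (k+1)
  have hA'B : A' = B ^ M (k+1) := a_succA hn ha
  obtain ⟨E, hEdef⟩ : ∃ x, x = B ^ (M (k+1) - 1) := ⟨_, rfl⟩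
  have hEB : E * B = A' := by
    rw [hEdef, hA'B, ← pow_succ]
    congr 1
    omega
  have hAB : A ∣ B := by
    rw [hBdef, a_top hn ha hk]
    exact dvd_mul_of_dvd_right (dvd_pow_self _ (by omega)) _
  have hAE : A ∣ E := by
    rw [hEdef]
    exact hAB.trans (dvd_pow_self _ (by omega))
  obtain ⟨F, hFdef⟩ : ∃ x, x = E / A := ⟨_, rfl⟩
  have hFA : F * A = E := by rw [hFdef]; exact Nat.div_mul_cancel hAE
  -- positivity
  have hApos : 0 < A := a_pos hn hc0 hc1 ha hM _
  have hBpos : 0 < B := a_pos hn hc0 hc1 ha hM _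
  have hA'pos : 0 < A' := a_pos hn hc0 hc1 ha hM _
  have hB'pos : 0 < B' := a_pos hn hc0 hc1 ha hM _
  have hA''pos : 0 < A'' := a_pos hn hc0 hc1 ha hM _
  have hB''pos : 0 < B'' := a_pos hn hc0 hc1 ha hM _
  have hQpos : 0 < Q := lt_of_lt_of_le hBpos hQB
  -- the Dirichlet parameter
  obtain ⟨R, hRdef⟩ : ∃ x, x = (A' - 1) / Q := ⟨_, rfl⟩
  have hQA1 : Q ≤ A' - 1 := by omega
  have hR1 : 1 ≤ R := by rw [hRdef]; exact (Nat.one_le_div_iff hQpos).mpr hQA1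
  have hRQle : R * Q ≤ A' - 1 := by rw [hRdef]; exact Nat.div_mul_le_self _ _
  have hA'le : A' ≤ (R + 1) * Q := by
    have hdm := Nat.div_add_mod (A' - 1) Q
    have hmod : (A' - 1) % Q < Q := Nat.mod_lt _ hQpos
    rw [← hRdef] at hdm
    have h3 : A' ≤ Q * R + Q := by omega
    calc A' ≤ Q * R + Q := h3
    _ = (R + 1) * Q := by ring
  have hRQ : R ≤ Q := by
    have h1 : (A' - 1)/Q ≤ (Q * Q)/Q := Nat.div_le_div_right (by omega)
    rw [Nat.mul_div_cancel_left Q hQpos] at h1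
    omega
  -- Dirichlet's theorem
  obtain ⟨s, r, hr0, hrR, hdio⟩ :=
    Real.exists_int_int_abs_mul_sub_le ((P:ℝ)/(B:ℝ)) (n := R) (by omega)
  obtain ⟨s0, hs0def⟩ : ∃ x : ℤ, x = r * (P:ℤ) - s * (B:ℤ) := ⟨_, rfl⟩
  have hBR : (0:ℝ) < (B:ℝ) := by exact_mod_cast hBpos
  have habs : |(s0:ℝ)| ≤ (B:ℝ)/((R:ℝ)+1) := by
    have he : (s0:ℝ) = (B:ℝ) * ((r:ℝ) * ((P:ℝ)/(B:ℝ)) - (s:ℝ)) := by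
      rw [hs0def]
      push_cast
      field_simp
    have hBdiv : (B:ℝ)/((R:ℝ)+1) = (B:ℝ) * (1/((R:ℝ)+1)) := by ring
    rw [he, abs_mul, abs_of_pos hBR, hBdiv]
    exact mul_le_mul_of_nonneg_left hdio (le_of_lt hBR)
  obtain ⟨b1, hb1def⟩ : ∃ x : ℤ, x = (E:ℤ) * s0 := ⟨_, rfl⟩
  have hb1abs : |(b1:ℝ)| ≤ (Q:ℝ) := by
    have hE0 : (0:ℝ) ≤ (E:ℝ) := by positivity
    have hRQ' : (A':ℝ) ≤ ((R:ℝ)+1) * (Q:ℝ) := by exact_mod_cast hA'le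
    have hR0 : (0:ℝ) < (R:ℝ) + 1 := by positivity
    have hb1e : |(b1:ℝ)| = (E:ℝ) * |(s0:ℝ)| := by
      rw [hb1def]
      push_cast
      rw [abs_mul, abs_of_nonneg hE0]
    rw [hb1e]
    calc (E:ℝ) * |(s0:ℝ)| ≤ (E:ℝ) * ((B:ℝ)/((R:ℝ)+1)) :=
          mul_le_mul_of_nonneg_left habs hE0
    _ = (A':ℝ)/((R:ℝ)+1) := by
          rw [mul_div_assoc']
          congr 1
          exact_mod_cast hEB
    _ ≤ (Q:ℝ) := by
          rw [div_le_iff₀ hR0]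
          linarith [hRQ']
  have hb1absZ : |b1| ≤ (Q:ℤ) := by exact_mod_cast (by push_cast; exact hb1abs :
    ((|b1| : ℤ):ℝ) ≤ ((Q:ℤ):ℝ))
  have hrQ : r ≤ (Q:ℤ) := le_trans hrR (by exact_mod_cast hRQ)
  -- the integer vector
  obtain ⟨z0, hz0def⟩ : ∃ x : ℤ, x = s - (F:ℤ) * (P1:ℤ) * s0 := ⟨_, rfl⟩
  set b : Fin (n+1) → ℤ := fun m => if (m:ℕ) = 1 then b1
    else if (m:ℕ) = n then -r else if (m:ℕ) = 0 then z0 else 0 with hbdef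
  have hb0 : b 0 = z0 := by
    simp only [hbdef]
    norm_num
    intro h
    omega
  have hbne : b ≠ 0 := by
    intro h
    have h0 := congrFun h ⟨n, by omega⟩
    have hval : b ⟨n, by omega⟩ = -r := by
      show (if n = 1 then b1 else if n = n then -r else if n = 0 then z0 else 0) = -r
      rw [if_neg (by omega : ¬ n = 1), if_pos rfl]
    rw [hval] at h0
    simp only [Pi.zero_apply] at h0
    omega
  have hle : ∀ i : Fin n, |b i.succ| ≤ (Q : ℤ) := by
    intro i
    have hsv : ((i.succ : Fin (n+1)) : ℕ) = (i:ℕ) + 1 := Fin.val_succ i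
    simp only [hbdef, hsv]
    by_cases h1 : (i:ℕ) + 1 = 1
    · rw [if_pos h1]; exact hb1absZ
    · rw [if_neg h1]
      by_cases h2 : (i:ℕ) + 1 = n
      · rw [if_pos h2, abs_neg, abs_of_pos hr0]; exact hrQ
      · rw [if_neg h2, if_neg (by omega : ¬ (i:ℕ) + 1 = 0)]
        simp
  -- the sum over coordinates
  have hsum : ∑ i : Fin n, (b i.succ : ℝ) * xVec a n i
      = (b1:ℝ) * xiCoord a n 1 + ((-r : ℤ) : ℝ) * xiCoord a n n := by
    have hne : (⟨0, by omega⟩ : Fin n) ≠ (⟨n-1, by omega⟩ : Fin n) := by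
      intro hcon
      have := congrArg Fin.val hcon
      simp only [Fin.val_mk] at this
      omega
    rw [Fintype.sum_eq_add (⟨0, by omega⟩ : Fin n) (⟨n-1, by omega⟩ : Fin n) hne]
    · have hv1 : ((Fin.succ ⟨0, by omega⟩ : Fin (n+1)) : ℕ) = 1 := by
        simp [Fin.val_succ]
      have hv2 : ((Fin.succ ⟨n-1, by omega⟩ : Fin (n+1)) : ℕ) = n := by
        simp only [Fin.val_succ, Fin.val_mk]; omega
      have hx1 : xVec a n ⟨0, by omega⟩ = xiCoord a n 1 := by
        rw [xVec]
      have hx2 : xVec a n ⟨n-1, by omega⟩ = xiCoord a n n := by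
        rw [xVec]; simp only [Fin.val_mk]; congr 1 <;> omega
      simp only [hbdef, hv1, hv2, if_pos rfl, if_neg (by omega : ¬ n = 1)]
      rw [hx1, hx2]
      push_cast
      ring
    · intro x hx
      have hxv : ((x.succ : Fin (n+1)) : ℕ) = (x:ℕ) + 1 := Fin.val_succ x
      have hx1 : ¬ ((x:ℕ) + 1 = 1) := by
        intro hcon
        exact hx.1 (Fin.ext (by simp only [Fin.val_mk]; omega))
      have hx2 : ¬ ((x:ℕ) + 1 = n) := by
        intro hcon
        exact hx.2 (Fin.ext (by simp only [Fin.val_mk]; omega))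
      simp only [hbdef, hxv, if_neg hx1, if_neg hx2,
        if_neg (by omega : ¬ (x:ℕ) + 1 = 0)]
      simp
  -- splits of the coordinates
  have hA0 : (0:ℝ) < (A:ℝ) := by exact_mod_cast hApos
  have hA'0 : (0:ℝ) < (A':ℝ) := by exact_mod_cast hA'pos
  have hB'0 : (0:ℝ) < (B':ℝ) := by exact_mod_cast hB'pos
  have hA''0 : (0:ℝ) < (A'':ℝ) := by exact_mod_cast hA''pos
  have hB''0 : (0:ℝ) < (B'':ℝ) := by exact_mod_cast hB''pos
  have hS1 : ((Spartial a n 1 k : ℚ):ℝ) = (P1:ℝ)/(A:ℝ) := by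
    have h := Pnum_eq hn hc0 hc1 ha hM 1 k (by omega) (by omega)
    rw [hP1def, h, ← hAdef, mul_div_cancel_left₀ _ (ne_of_gt hA0)]
  have hSn : ((Spartial a n n k : ℚ):ℝ) = (P:ℝ)/(B:ℝ) := by
    have h := Pnum_eq hn hc0 hc1 ha hM n k (by omega) le_rfl
    rw [hPdef, h, ← hBdef, mul_div_cancel_left₀ _ (ne_of_gt hBR)]
  obtain ⟨T1, hT1def⟩ : ∃ x : ℝ, x = ∑' h : ℕ, (1 : ℝ) / (a (n * (h + (k+1+1)) + 1)) :=
    ⟨_, rfl⟩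
  obtain ⟨Tn, hTndef⟩ : ∃ x : ℝ, x = ∑' h : ℕ, (1 : ℝ) / (a (n * (h + (k+1+1)) + n)) :=
    ⟨_, rfl⟩
  have hxi1 : xiCoord a n 1 = (P1:ℝ)/(A:ℝ) + 1/(A':ℝ) + T1 := by
    have h := xi_split hn hc0 hc1 ha hM 1 (k+1) (by omega) (by omega)
    have hsp : Spartial a n 1 (k+1) = Spartial a n 1 k + 1/(A' : ℚ) := by
      rw [Spartial, Spartial, Finset.sum_range_succ, hA'def]
    rw [h, hsp, ← hT1def]
    push_cast
    rw [hS1]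
  have hxin : xiCoord a n n = (P:ℝ)/(B:ℝ) + 1/(B':ℝ) + Tn := by
    have h := xi_split hn hc0 hc1 ha hM n (k+1) (by omega) le_rfl
    have hsp : Spartial a n n (k+1) = Spartial a n n k + 1/(B' : ℚ) := by
      rw [Spartial, Spartial, Finset.sum_range_succ, hB'def]
    rw [h, hsp, ← hTndef]
    push_cast
    rw [hSn]
  -- the value of the linear form
  have hcastE : (E:ℝ) * (B:ℝ) = (A':ℝ) := by exact_mod_cast hEB
  have hcastF : (F:ℝ) * (A:ℝ) = (E:ℝ) := by exact_mod_cast hFA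
  have hEpos : 0 < E := by
    rw [hEdef]
    exact Nat.pow_pos hBpos
  have hFpos : 0 < F := by
    rcases Nat.eq_zero_or_pos F with h | h
    · rw [h, Nat.zero_mul] at hFA
      omega
    · exact h
  have hF0 : ((F:ℝ)) ≠ 0 := by
    have : (0:ℝ) < (F:ℝ) := by exact_mod_cast hFpos
    exact ne_of_gt this
  have key : (z0:ℝ) + ((b1:ℝ) * xiCoord a n 1 + ((-r : ℤ) : ℝ) * xiCoord a n n)
      = -(r:ℝ)/(B':ℝ) + ((b1:ℝ) * T1 - (r:ℝ) * Tn) := by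
    rw [hxi1, hxin]
    have hb1' : (b1:ℝ) = (E:ℝ) * ((r:ℝ)*(P:ℝ) - (s:ℝ)*(B:ℝ)) := by
      rw [hb1def, hs0def]; push_cast; ring
    have hz0' : (z0:ℝ) = (s:ℝ) - (F:ℝ)*(P1:ℝ)*((r:ℝ)*(P:ℝ) - (s:ℝ)*(B:ℝ)) := by
      rw [hz0def, hs0def]; push_cast; ring
    rw [hb1', hz0', ← hcastE, ← hcastF]
    push_cast
    field_simp
    ring
  -- put together
  have hval := psiStar_le (xVec a n) Q b hbne hle
  rw [hsum, hb0, key] at hval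
  refine hval.trans ?_
  -- tail bounds
  have hT1le : T1 ≤ 2/(A'':ℝ) := by
    have := tail_le hn hc0 hc1 ha hM (j := 1) (k := k+1) (by omega) (by omega)
    rw [hT1def, hA''def]
    exact this
  have hTnle : Tn ≤ 2/(B'':ℝ) := by
    have := tail_le hn hc0 hc1 ha hM (j := n) (k := k+1) (by omega) le_rfl
    rw [hTndef, hB''def]
    exact this
  have hT1pos : 0 < T1 := by
    rw [hT1def]
    exact tail_pos hn hc0 hc1 ha hM (by omega) (by omega)
  have hTnpos : 0 < Tn := by
    rw [hTndef]
    exact tail_pos hn hc0 hc1 ha hM (by omega) le_rfl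
  have hrpos : (0:ℝ) < (r:ℝ) := by exact_mod_cast hr0
  have hrQ' : (r:ℝ) ≤ (Q:ℝ) := by exact_mod_cast hrQ
  have htri : |-(r:ℝ)/(B':ℝ) + ((b1:ℝ) * T1 - (r:ℝ) * Tn)|
      ≤ (r:ℝ)/(B':ℝ) + ((Q:ℝ) * (2/(A'':ℝ)) + (Q:ℝ) * (2/(B'':ℝ))) := by
    have h1 : |(b1:ℝ) * T1| ≤ (Q:ℝ) * (2/(A'':ℝ)) := by
      rw [abs_mul, abs_of_pos hT1pos]
      apply mul_le_mul hb1abs hT1le (le_of_lt hT1pos) (by positivity)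
    have h2 : |(r:ℝ) * Tn| ≤ (Q:ℝ) * (2/(B'':ℝ)) := by
      rw [abs_mul, abs_of_pos hTnpos, abs_of_pos hrpos]
      apply mul_le_mul hrQ' hTnle (le_of_lt hTnpos) (by positivity)
    have habs0 : |-(r:ℝ)/(B':ℝ)| = (r:ℝ)/(B':ℝ) := by
      rw [abs_div, abs_neg, abs_of_pos hrpos, abs_of_pos hB'0]
    calc |-(r:ℝ)/(B':ℝ) + ((b1:ℝ) * T1 - (r:ℝ) * Tn)|
        ≤ |-(r:ℝ)/(B':ℝ)| + |(b1:ℝ) * T1 - (r:ℝ) * Tn| := abs_add_le _ _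
    _ ≤ |-(r:ℝ)/(B':ℝ)| + (|(b1:ℝ) * T1| + |(r:ℝ) * Tn|) := by
        have habss : |(b1:ℝ) * T1 - (r:ℝ) * Tn| ≤ |(b1:ℝ) * T1| + |(r:ℝ) * Tn| :=
          abs_sub _ _
        linarith
    _ ≤ (r:ℝ)/(B':ℝ) + ((Q:ℝ) * (2/(A'':ℝ)) + (Q:ℝ) * (2/(B'':ℝ))) := by
        rw [habs0]
        linarith [h1, h2]
  refine htri.trans ?_
  -- final numeric estimate
  have hQ1 : (1:ℝ) ≤ (Q:ℝ) := by exact_mod_cast hQpos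
  have hQn : (0:ℝ) < (Q:ℝ)^n := by positivity
  have hA'1 : (1:ℝ) ≤ (A':ℝ) := by exact_mod_cast hA'pos
  rw [le_div_iff₀ hQn]
  have h_main : (r:ℝ)/(B':ℝ) * (Q:ℝ)^n ≤ c := by
    rw [div_mul_eq_mul_div, div_le_iff₀ hB'0]
    have hrQA : (r:ℝ)*(Q:ℝ) ≤ (A':ℝ) - 1 := by
      have h1 : ((R*Q : ℕ):ℝ) ≤ ((A' - 1 : ℕ):ℝ) := by exact_mod_cast hRQle
      have h2 : ((A' - 1 : ℕ):ℝ) = (A':ℝ) - 1 := by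
        have h1' : 1 ≤ A' := hA'pos
        push_cast [Nat.cast_sub h1']
        ring
      have h3 : (r:ℝ) ≤ (R:ℝ) := by exact_mod_cast hrR
      have h4 : (0:ℝ) ≤ (Q:ℝ) := by positivity
      rw [h2] at h1
      push_cast at h1
      have h5 : (r:ℝ)*(Q:ℝ) ≤ (R:ℝ)*(Q:ℝ) := mul_le_mul_of_nonneg_right h3 h4
      linarith
    have hQA' : (Q:ℝ) ≤ (A':ℝ) := by exact_mod_cast le_of_lt hQA
    have hpow : (Q:ℝ)^(n-1) ≤ (A':ℝ)^(n-1) := pow_le_pow_left₀ (by positivity) hQA' _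
    have hsplit : (r:ℝ) * (Q:ℝ)^n = ((r:ℝ)*(Q:ℝ)) * (Q:ℝ)^(n-1) := by
      rw [mul_assoc, ← pow_succ']
      congr 2
      omega
    rw [hsplit]
    calc ((r:ℝ)*(Q:ℝ)) * (Q:ℝ)^(n-1) ≤ ((A':ℝ) - 1) * (A':ℝ)^(n-1) := by
          apply mul_le_mul hrQA hpow (by positivity) (by linarith)
    _ ≤ (A':ℝ) * (A':ℝ)^(n-1) := by
          have h7 : (0:ℝ) ≤ (A':ℝ)^(n-1) := by positivity
          have h8 : (A':ℝ) - 1 ≤ (A':ℝ) := by linarith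
          exact mul_le_mul_of_nonneg_right h8 h7
    _ = (A':ℝ)^n := by rw [← pow_succ']; congr 1; omega
    _ ≤ c * (B':ℝ) := cB_ge hn hc0 hc1 ha hM (by omega)
  have h_tail : ((Q:ℝ) * (2/(A'':ℝ)) + (Q:ℝ) * (2/(B'':ℝ))) * (Q:ℝ)^n ≤ c * ε := by
    have hB''A'' : (A'':ℝ) ≤ (B'':ℝ) := by
      have h5 : A'' ≤ B'' := (a_mono hn hc0 hc1 ha hM).monotone (by omega)
      exact_mod_cast h5
    have h1 : (Q:ℝ) * (2/(B'':ℝ)) ≤ (Q:ℝ) * (2/(A'':ℝ)) := by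
      apply mul_le_mul_of_nonneg_left _ (by positivity)
      apply div_le_div_of_nonneg_left (by norm_num) hA''0 hB''A''
    have h2 : ((Q:ℝ) * (2/(A'':ℝ)) + (Q:ℝ) * (2/(B'':ℝ))) * (Q:ℝ)^n
        ≤ 4 * (Q:ℝ)^(n+1) / (A'':ℝ) := by
      have heq : (Q:ℝ) * (2/(A'':ℝ)) * (Q:ℝ)^n + (Q:ℝ) * (2/(A'':ℝ)) * (Q:ℝ)^n
          = 4 * (Q:ℝ)^(n+1) / (A'':ℝ) := by
        rw [pow_succ]
        field_simp
        ring
      calc ((Q:ℝ) * (2/(A'':ℝ)) + (Q:ℝ) * (2/(B'':ℝ))) * (Q:ℝ)^n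
          = (Q:ℝ) * (2/(A'':ℝ)) * (Q:ℝ)^n + (Q:ℝ) * (2/(B'':ℝ)) * (Q:ℝ)^n := by
            ring
      _ ≤ (Q:ℝ) * (2/(A'':ℝ)) * (Q:ℝ)^n + (Q:ℝ) * (2/(A'':ℝ)) * (Q:ℝ)^n := by
            have h6 := mul_le_mul_of_nonneg_right h1 (le_of_lt hQn)
            linarith
      _ = 4 * (Q:ℝ)^(n+1) / (A'':ℝ) := heq
    have hA''ge : (A':ℝ)^(n+2) ≤ (A'':ℝ) := by
      have hbig := A'_ge hn hc0 hc1 ha hM (k := k+1) (by omega)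
      have hexp : (A':ℝ)^(n+2) ≤ (A':ℝ)^(n*(n+2)) :=
        pow_le_pow_right₀ hA'1 (Nat.le_mul_of_pos_left _ (by omega))
      exact hexp.trans hbig
    have h3 : 4 * (Q:ℝ)^(n+1) / (A'':ℝ) ≤ 4 / (A':ℝ) := by
      rw [div_le_div_iff₀ hA''0 hA'0]
      have hQpow : (Q:ℝ)^(n+1) ≤ (A':ℝ)^(n+1) := by
        apply pow_le_pow_left₀ (by positivity) (by exact_mod_cast le_of_lt hQA)
      calc 4 * (Q:ℝ)^(n+1) * (A':ℝ) ≤ 4 * (A':ℝ)^(n+1) * (A':ℝ) := by gcongr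
      _ = 4 * (A':ℝ)^(n+2) := by rw [mul_assoc, ← pow_succ]
      _ ≤ 4 * (A'':ℝ) := by linarith [hA''ge]
    have h4 : 4 / (A':ℝ) ≤ c * ε := by
      have hcep : (0:ℝ) < c * ε := by positivity
      have hAA' : (A:ℝ) ≤ (A':ℝ) := by
        have h6 : A ≤ A' := (a_mono hn hc0 hc1 ha hM).monotone
          (Nat.add_le_add_right (Nat.mul_le_mul_left n (by omega)) 1)
        exact_mod_cast h6
      have hCA' : 4/(c*ε) ≤ (A':ℝ) := hC2.trans hAA'
      rw [div_le_iff₀ hA'0]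
      rw [div_le_iff₀ hcep] at hCA'
      exact hCA'.trans_eq (by ring)
    linarith
  calc ((r:ℝ)/(B':ℝ) + ((Q:ℝ) * (2/(A'':ℝ)) + (Q:ℝ) * (2/(B'':ℝ)))) * (Q:ℝ)^n
      = (r:ℝ)/(B':ℝ) * (Q:ℝ)^n
        + ((Q:ℝ) * (2/(A'':ℝ)) + (Q:ℝ) * (2/(B'':ℝ))) * (Q:ℝ)^n := by ring
  _ ≤ c + c * ε := add_le_add h_main h_tail
  _ = c * (1+ε) := by ring

end Est

end ThetaAux

theorem theta_star_upper (n : ℕ) (hn : 2 ≤ n) (c : ℝ) (hc : c ∈ Set.Ioo (0:ℝ) 1) :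
    ∃ M : ℕ → ℕ, (∀ k, 2 ≤ M k) ∧ ∀ a : ℕ → ℕ, IsConstrSeq n c M a →
      (∀ ε : ℝ, 0 < ε → ∀ᶠ Q : ℕ in Filter.atTop,
        psiStar (xVec a n) Q ≤ c * (1 + ε) / (Q : ℝ) ^ n) ∧
      thetaStar (xVec a n) ≤ c := by
  obtain ⟨hc0, hc1⟩ := hc
  refine ⟨fun _ => n + 2, fun k => by show 2 ≤ n + 2; omega, ?_⟩
  intro a ha
  have hM : ∀ k, n + 2 ≤ (fun _ : ℕ => n + 2) k := fun _ => le_rfl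
  have hpow2 : ∀ k : ℕ, 2 ^ k ≤ a (n * k + 1) := by
    intro k
    have hg := ThetaAux.geom_growth hn hc0 hc1 ha hM (K := 0) (j := 1)
      le_rfl (by omega) k
    have h1 : 1 ≤ a (n * 0 + 1) := ThetaAux.a_pos hn hc0 hc1 ha hM _
    calc 2 ^ k = 2 ^ k * 1 := by ring
    _ ≤ 2 ^ k * a (n * 0 + 1) := Nat.mul_le_mul_left _ h1
    _ ≤ a (n * (0 + k) + 1) := hg
    _ = a (n * k + 1) := by rw [Nat.zero_add]
  have part1 : ∀ ε : ℝ, 0 < ε → ∀ᶠ Q : ℕ in Filter.atTop,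
      psiStar (xVec a n) Q ≤ c * (1 + ε) / (Q : ℝ) ^ n := by
    intro ε hε
    obtain ⟨K0, hK0⟩ := pow_unbounded_of_one_lt
      (max (2*(2/c)^n/c) (4/(c*ε))) (by norm_num : (1:ℝ) < 2)
    have hAK : ∀ k, K0 + 1 ≤ k → max (2*(2/c)^n/c) (4/(c*ε)) ≤ (a (n*k+1) : ℝ) := by
      intro k hk
      have h1 : (2:ℝ) ^ K0 ≤ (2:ℝ) ^ k := pow_le_pow_right₀ (by norm_num) (by omega)
      have h2 : ((2 ^ k : ℕ) : ℝ) ≤ (a (n*k+1) : ℝ) := by exact_mod_cast hpow2 k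
      push_cast at h2
      linarith
    filter_upwards [Filter.eventually_ge_atTop (a (n*(K0+1)+1))] with Q hQ
    -- locate the block
    have hKQ : K0 + 1 ≤ Q := by
      have h1 := hpow2 (K0+1)
      have h2 := Nat.lt_two_pow_self (n := K0+1)
      omega
    set Pprop : ℕ → Prop := fun k => a (n*k+1) ≤ Q with hPdef
    have hPK : Pprop (K0+1) := hQ
    set k := Nat.findGreatest Pprop Q with hkdef
    have hPk : Pprop k := Nat.findGreatest_spec hKQ hPK
    have hkK : K0 + 1 ≤ k := Nat.le_findGreatest hKQ hPK
    have hk1 : 1 ≤ k := by omega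
    have hup : Q < a (n*(k+1)+1) := by
      by_cases hcase : k + 1 ≤ Q
      · have := Nat.findGreatest_is_greatest (P := Pprop) (n := Q)
          (by omega : Nat.findGreatest Pprop Q < k + 1) hcase
        rw [hPdef] at this
        simp only [not_le] at this
        exact this
      · have h1 : Q ≤ k := by omega
        have h2 := hpow2 (k+1)
        have h3 := Nat.lt_two_pow_self (n := k+1)
        omega
    have hC1 : 2*(2/c)^n/c ≤ (a (n*k+1) : ℝ) :=
      le_trans (le_max_left _ _) (hAK k hkK)
    have hC2 : 4/(c*ε) ≤ (a (n*k+1) : ℝ) :=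
      le_trans (le_max_right _ _) (hAK k hkK)
    rcases lt_or_ge Q (a (n*k+n)) with hcase | hcase
    · exact ThetaAux.caseI_est hn hc0 hc1 ha hM hk1 (le_of_lt hε) hC1 hPk hcase
    · rcases lt_or_ge (Q*Q) (a (n*(k+1)+1)) with hcase2 | hcase2
      · exact ThetaAux.caseII_est hn hc0 hc1 ha hM hk1 (le_of_lt hε) hcase hcase2
      · exact ThetaAux.caseIII_est hn hc0 hc1 ha hM hk1 hε hC2 hcase hup hcase2
  refine ⟨part1, ?_⟩
  -- limsup bound
  have hbd : ∀ ε : ℝ, 0 < ε → thetaStar (xVec a n) ≤ c * (1 + ε) := by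
    intro ε hε
    rw [thetaStar]
    apply Filter.limsup_le_of_le
    · exact Filter.isCoboundedUnder_le_of_le Filter.atTop (x := 0)
        (fun Q => mul_nonneg (by positivity) (psiStar_nonneg _ _))
    · have hev := part1 ε hε
      filter_upwards [hev, Filter.eventually_ge_atTop 1] with Q hQ hQ1
      have hQn : (0:ℝ) < (Q:ℝ)^n := by
        have : (1:ℝ) ≤ (Q:ℝ) := by exact_mod_cast hQ1
        positivity
      calc (Q:ℝ)^n * psiStar (xVec a n) Q
          ≤ (Q:ℝ)^n * (c * (1 + ε) / (Q:ℝ)^n) := by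
            exact mul_le_mul_of_nonneg_left hQ (le_of_lt hQn)
      _ = c * (1 + ε) := by field_simp
  by_contra hcon
  push_neg at hcon
  have hd : 0 < thetaStar (xVec a n) - c := by linarith
  have hε : 0 < (thetaStar (xVec a n) - c) / (2*c) := by positivity
  have hthis := hbd _ hε
  have hkey : c * (1 + (thetaStar (xVec a n) - c) / (2*c))
      = c + (thetaStar (xVec a n) - c) / 2 := by
    field_simp
  rw [hkey] at hthis
  linarith
end
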